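/- arXiv:math-ph/0412019 — 2 statements merged into one kernel-verified Lean document; each statement's English description precedes it below -/
import Mathlib

section
/- Let u : ℝⁿ → ℝⁿ be a C¹ divergence-free vector field, i.e. tr Du(x) = 0 for all x. Let x, ξ be differentiable curves with x'(t) = u(x(t)), ξ'(t) = −(Du(x(t)))ᵀ ξ(t), and ξ(t) ≠ 0 for all t, and let b₁, …, b_{n−1} : ℝ → ℂⁿ be differentiable solutions of the kinematic dynamo amplitude equation bᵢ'(t) = Du(x(t)) bᵢ(t) satisfying bᵢ(0)·ξ(0) = 0. Then the function t ↦ det[b₁(t), …, b_{n−1}(t), ξ(t)] · ‖ξ(t)‖^{−2} is constant, where det[v₁, …, vₙ] denotes the determinant of the n×n complex matrix with columns v₁, …, vₙ (ξ(t) viewed in ℂⁿ). -/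
noncomputable def detCML (n : ℕ) : ContinuousMultilinearMap ℂ (fun _ : Fin n => (Fin n → ℂ)) ℂ :=
  MultilinearMap.mkContinuous (Matrix.detRowAlternating (R := ℂ) (n := Fin n)).toMultilinearMap
    (n.factorial) (by
      intro m
      show ‖Matrix.det (Matrix.of m)‖ ≤ _
      rw [Matrix.det_apply]
      refine (norm_sum_le _ _).trans ?_
      have key : ∀ σ : Equiv.Perm (Fin n),
          ‖(Equiv.Perm.sign σ : ℤ) • ∏ i, Matrix.of m (σ i) i‖ ≤ ∏ i, ‖m i‖ := by
        intro σ
        rw [zsmul_eq_mul, norm_mul]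
        have h1 : ‖((Equiv.Perm.sign σ : ℤ) : ℂ)‖ = 1 := by
          rcases Int.units_eq_one_or (Equiv.Perm.sign σ) with h | h <;> simp [h]
        rw [h1, one_mul, norm_prod]
        calc ∏ i, ‖Matrix.of m (σ i) i‖ ≤ ∏ i, ‖m (σ i)‖ := by
              refine Finset.prod_le_prod (fun _ _ => norm_nonneg _) (fun i _ => ?_)
              exact norm_le_pi_norm (m (σ i)) i
          _ = ∏ i, ‖m i‖ := Equiv.prod_comp σ (fun i => ‖m i‖)
      refine (Finset.sum_le_sum fun σ _ => key σ).trans ?_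
      simp [Finset.card_univ, Fintype.card_perm])

lemma detCML_apply {n : ℕ} (m : Fin n → Fin n → ℂ) : detCML n m = Matrix.det (Matrix.of m) := rfl

lemma liouville {n : ℕ} (M A : Matrix (Fin n) (Fin n) ℂ) :
    ∑ j, (M.updateCol j (A.mulVec (fun i => M i j))).det = A.trace * M.det := by
  have h1 : ∀ j, (M.updateCol j (A.mulVec (fun i => M i j))).det
      = ((M.adjugate * A * M) j j) := by
    intro j
    rw [← Matrix.cramer_apply, Matrix.cramer_eq_adjugate_mulVec, Matrix.mulVec_mulVec]
    simp [Matrix.mul_apply, Matrix.mulVec, dotProduct]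
  calc ∑ j, (M.updateCol j (A.mulVec (fun i => M i j))).det
      = (M.adjugate * A * M).trace := by
        rw [Matrix.trace]; exact Finset.sum_congr rfl fun j _ => by rw [h1 j]; rfl
    _ = (M * M.adjugate * A).trace := by rw [Matrix.trace_mul_comm, ← Matrix.mul_assoc]
    _ = A.trace * M.det := by rw [Matrix.mul_adjugate]; simp [Matrix.smul_mul, mul_comm]

lemma det_zero_of_orth {n : ℕ} (M : Matrix (Fin n) (Fin n) ℂ) (v : Fin n → ℂ) (hv : v ≠ 0)
    (h : ∀ j, ∑ i, v i * M i j = 0) : M.det = 0 := by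
  rw [← Matrix.det_transpose, ← Matrix.exists_mulVec_eq_zero_iff]
  refine ⟨v, hv, ?_⟩
  funext j
  simpa [Matrix.mulVec, dotProduct, mul_comm] using h j

lemma const_of_hasDerivAt_zero {f : ℝ → ℂ} (h : ∀ t, HasDerivAt f 0 t) (a c : ℝ) : f a = f c :=
  is_const_of_deriv_eq_zero (fun t => (h t).differentiableAt) (fun t => (h t).deriv) a c

noncomputable def jacobian {n : ℕ} (u : (Fin n → ℝ) → (Fin n → ℝ)) (x : Fin n → ℝ) :
    Matrix (Fin n) (Fin n) ℝ :=
  Matrix.of fun i j => fderiv ℝ u x (Pi.single j 1) i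

set_option maxHeartbeats 1000000 in
/-- For the kinematic dynamo amplitude equation `bᵢ' = Du(x) bᵢ` with a
divergence-free `u`, the quantity `det[b₁,…,b_{n−1},ξ] · ‖ξ‖⁻²` is conserved. -/
theorem stmt_5 {n : ℕ}
    (u : (Fin n → ℝ) → (Fin n → ℝ)) (hu : ContDiff ℝ 1 u)
    (hdiv : ∀ y, Matrix.trace (jacobian u y) = 0)
    (x : ℝ → Fin n → ℝ) (ξ : ℝ → Fin n → ℝ) (b : Fin (n - 1) → ℝ → Fin n → ℂ)
    (hξne : ∀ t, ξ t ≠ 0)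
    (hx : ∀ t, HasDerivAt x (u (x t)) t)
    (hξ : ∀ t, HasDerivAt ξ (-((jacobian u (x t)).transpose.mulVec (ξ t))) t)
    (hb : ∀ i t, HasDerivAt (b i)
      (((jacobian u (x t)).map Complex.ofReal).mulVec (b i t)) t)
    (hb0 : ∀ i, (∑ j, b i 0 j * (ξ 0 j : ℂ)) = 0) :
    ∀ t₁ t₂ : ℝ,
      (Matrix.det (Matrix.of fun i (j : Fin n) =>
            if h : (j : ℕ) < n - 1 then b ⟨j, h⟩ t₁ i else (ξ t₁ i : ℂ)))
          * ((∑ i, ξ t₁ i ^ 2 : ℝ) : ℂ)⁻¹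
      = (Matrix.det (Matrix.of fun i (j : Fin n) =>
            if h : (j : ℕ) < n - 1 then b ⟨j, h⟩ t₂ i else (ξ t₂ i : ℂ)))
          * ((∑ i, ξ t₂ i ^ 2 : ℝ) : ℂ)⁻¹ := by
  intro t₁ t₂
  -- dispose of n = 0
  rcases Nat.eq_zero_or_pos n with hn0 | hn
  · exfalso; exact hξne 0 (funext fun i => absurd i.isLt (by omega))
  -- notation
  set l : Fin n := ⟨n - 1, by omega⟩ with hldef
  have hlast : ∀ j : Fin n, ¬((j : ℕ) < n - 1) → j = l := by
    intro j hj; have := j.isLt; exact Fin.ext (by simp [hldef]; omega)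
  set A : ℝ → Matrix (Fin n) (Fin n) ℂ := fun t => (jacobian u (x t)).map Complex.ofReal
    with hAdef
  set ξc : ℝ → Fin n → ℂ := fun t i => ((ξ t i : ℝ) : ℂ) with hξcdef
  -- complex coercion of the ξ equation
  have hcast : ∀ t, (fun i => ((-((jacobian u (x t)).transpose.mulVec (ξ t))) i : ℂ))
      = -((A t).transpose.mulVec (ξc t)) := by
    intro t; funext i
    simp only [hAdef, hξcdef, Matrix.mulVec, dotProduct, Pi.neg_apply,
      Matrix.transpose_apply, Matrix.map_apply]
    push_cast
    ring
  have hξcder : ∀ t, HasDerivAt (fun s => ξc s) (-((A t).transpose.mulVec (ξc t))) t := by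
    intro t
    rw [← hcast t]
    exact hasDerivAt_pi.2 fun i => ((hasDerivAt_pi.1 (hξ t)) i).ofReal_comp
  -- conservation of b i · ξ
  have horth : ∀ i t, ∑ j, b i t j * ξc t j = 0 := by
    intro i t
    have hderiv : ∀ s, HasDerivAt (fun r => ∑ j, b i r j * ξc r j) 0 s := by
      intro s
      have h1 : HasDerivAt (fun r => ∑ j, b i r j * ξc r j)
          (∑ j, (((A s).mulVec (b i s)) j * ξc s j
            + b i s j * ((-((A s).transpose.mulVec (ξc s))) j))) s := by
        refine HasDerivAt.fun_sum fun j _ => ?_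
        exact ((hasDerivAt_pi.1 (hb i s)) j).mul ((hasDerivAt_pi.1 (hξcder s)) j)
      have h2 : (∑ j, (((A s).mulVec (b i s)) j * ξc s j
            + b i s j * ((-((A s).transpose.mulVec (ξc s))) j))) = 0 := by
        rw [Finset.sum_add_distrib]
        have e1 : (∑ j, ((A s).mulVec (b i s)) j * ξc s j)
            = dotProduct ((A s).mulVec (b i s)) (ξc s) := rfl
        have e2 : (∑ j, b i s j * ((-((A s).transpose.mulVec (ξc s))) j))
            = dotProduct (b i s) (-((A s).transpose.mulVec (ξc s))) := rfl
        rw [e1, e2, dotProduct_neg, dotProduct_comm,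
          Matrix.dotProduct_mulVec, ← Matrix.mulVec_transpose]
        rw [dotProduct_comm]
        ring
      rwa [h2] at h1
    have := const_of_hasDerivAt_zero hderiv t 0
    rw [this]
    exact hb0 i
  -- the column curves
  set g : ℝ → Fin n → Fin n → ℂ := fun t j =>
    if h : (j : ℕ) < n - 1 then (fun i => b ⟨j, h⟩ t i) else ξc t with hgdef
  set g' : ℝ → Fin n → Fin n → ℂ := fun t j =>
    if h : (j : ℕ) < n - 1 then (A t).mulVec (b ⟨j, h⟩ t)
    else -((A t).transpose.mulVec (ξc t)) with hg'def
  have hgder : ∀ t, HasDerivAt (fun s => g s) (g' t) t := by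
    intro t
    refine hasDerivAt_pi.2 fun j => ?_
    simp only [hgdef, hg'def]
    split_ifs with h
    · exact hb ⟨j, h⟩ t
    · exact hξcder t
  -- the matrices
  set N : ℝ → Matrix (Fin n) (Fin n) ℂ := fun t => Matrix.of (g t) with hNdef
  set M : ℝ → Matrix (Fin n) (Fin n) ℂ := fun t => (N t).transpose with hMdef
  set D : ℝ → ℂ := fun t => (detCML n) (g t) with hDdef
  have hMcol : ∀ t j, (fun i => M t i j) = g t j := by intro t j; rfl
  have hMl : ∀ t, (fun i => M t i l) = ξc t := by
    intro t; rw [hMcol]; simp only [hgdef]; rw [dif_neg (by simp [hldef])]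
  -- derivative of the determinant
  have hDder : ∀ t, HasDerivAt D
      (∑ j, ((M t).updateCol j (g' t j)).det) t := by
    intro t
    have h0 : HasFDerivAt (⇑(detCML n))
        (((detCML n).linearDeriv (g t)).restrictScalars ℝ) (g t) :=
      ((detCML n).hasFDerivAt (g t)).restrictScalars ℝ
    have h1' := h0.comp_hasDerivAt t (hgder t)
    have h1 : HasDerivAt D (((detCML n).linearDeriv (g t)) (g' t)) t := h1'
    rw [ContinuousMultilinearMap.linearDeriv_apply] at h1
    convert h1 using 1
    refine Finset.sum_congr rfl fun j _ => ?_
    rw [detCML_apply]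
    have heq : Matrix.of (Function.update (g t) j (g' t j)) = (N t).updateRow j (g' t j) := rfl
    rw [heq]
    show ((N t).transpose.updateCol j (g' t j)).det = _
    rw [Matrix.updateCol_transpose, Matrix.det_transpose]
  -- the symmetric part and the quadratic form
  set S : ℝ → Matrix (Fin n) (Fin n) ℂ := fun t => A t + (A t).transpose with hSdef
  set s : ℝ → ℂ := fun t => dotProduct (ξc t) ((S t).mulVec (ξc t)) with hsdef
  set r : ℝ → ℂ := fun t => ((∑ i, ξ t i ^ 2 : ℝ) : ℂ) with hrdef
  have hr0 : ∀ t, r t ≠ 0 := by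
    intro t
    obtain ⟨i, hi⟩ := Function.ne_iff.1 (hξne t)
    have hpos : 0 < ∑ i, ξ t i ^ 2 := by
      refine Finset.sum_pos' (fun i _ => sq_nonneg _) ⟨i, Finset.mem_univ i, ?_⟩
      have : ξ t i ≠ 0 := hi
      positivity
    simp only [hrdef]
    exact_mod_cast ne_of_gt hpos
  have hrξc : ∀ t, ∑ i, ξc t i * ξc t i = r t := by
    intro t; simp only [hξcdef, hrdef]; push_cast; exact Finset.sum_congr rfl fun i _ => by ring
  -- the split of g'
  have hg'split : ∀ t j, g' t j = (A t).mulVec (g t j)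
      + (if j = l then -((S t).mulVec (ξc t)) else 0) := by
    intro t j
    by_cases hjl : j = l
    · subst hjl
      have h : ¬((l : ℕ) < n - 1) := by simp [hldef]
      simp only [hg'def, hgdef, dif_neg h, if_pos rfl]
      simp only [hSdef, Matrix.add_mulVec, eq_self_iff_true, if_true]
      funext i
      simp only [Pi.add_apply, Pi.neg_apply, Pi.sub_apply]
      ring
    · have h : (j : ℕ) < n - 1 := by
        by_contra hc; exact hjl (hlast j hc)
      simp only [hg'def, hgdef, dif_pos h, if_neg hjl, add_zero]
  -- trace of A is zero
  have htrA : ∀ t, (A t).trace = 0 := by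
    intro t
    simp only [hAdef, Matrix.trace, Matrix.diag, Matrix.map_apply]
    push_cast
    have := hdiv (x t)
    simp only [Matrix.trace, Matrix.diag] at this
    exact_mod_cast congrArg (Complex.ofReal) this
  -- orthogonality: det of M with last column replaced by anything ⊥ ξ vanishes
  have hdetorth : ∀ t (w : Fin n → ℂ), (∑ i, ξc t i * w i) = 0 →
      ((M t).updateCol l w).det = 0 := by
    intro t w hw
    refine det_zero_of_orth _ (ξc t) ?_ ?_
    · intro h0
      exact hξne t (funext fun i => by
        have := congrFun h0 i
        simpa [hξcdef, Complex.ofReal_eq_zero] using this)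
    · intro j
      by_cases hjl : j = l
      · subst hjl
        simpa [Matrix.updateCol_apply] using hw
      · have hj : (j : ℕ) < n - 1 := by
          by_contra h; exact hjl (hlast j h)
        have : ∀ i, ((M t).updateCol l w) i j = b ⟨j, hj⟩ t i := by
          intro i
          rw [Matrix.updateCol_apply, if_neg hjl]
          show g t j i = _
          simp only [hgdef]; rw [dif_pos hj]
        simp only [this]
        calc ∑ i, ξc t i * b ⟨j, hj⟩ t i = ∑ i, b ⟨j, hj⟩ t i * ξc t i :=
              Finset.sum_congr rfl fun i _ => mul_comm _ _
          _ = 0 := horth _ t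
  -- determinant with last column S ξ
  have hdetS : ∀ t, ((M t).updateCol l ((S t).mulVec (ξc t))).det
      = (s t * (r t)⁻¹) * (M t).det := by
    intro t
    have hdecomp : (S t).mulVec (ξc t)
        = (s t * (r t)⁻¹) • (ξc t) + ((S t).mulVec (ξc t) - (s t * (r t)⁻¹) • (ξc t)) := by
      funext i
      simp only [Pi.add_apply, Pi.sub_apply, Pi.smul_apply, smul_eq_mul]
      ring
    rw [hdecomp, Matrix.det_updateCol_add, Matrix.det_updateCol_smul]
    have h0 : ((M t).updateCol l
        ((S t).mulVec (ξc t) - (s t * (r t)⁻¹) • (ξc t))).det = 0 := by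
      refine hdetorth t _ ?_
      have hs' : s t = ∑ i, ξc t i * (S t).mulVec (ξc t) i := rfl
      simp only [Pi.sub_apply, Pi.smul_apply, smul_eq_mul]
      have hsum : ∑ i, ξc t i * ((S t).mulVec (ξc t) i - s t * (r t)⁻¹ * ξc t i)
          = (∑ i, ξc t i * (S t).mulVec (ξc t) i)
            - s t * (r t)⁻¹ * (∑ i, ξc t i * ξc t i) := by
        rw [Finset.mul_sum, ← Finset.sum_sub_distrib]
        exact Finset.sum_congr rfl fun i _ => by ring
      rw [hsum, ← hs', hrξc t, mul_assoc, inv_mul_cancel₀ (hr0 t), mul_one, sub_self]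
    rw [h0, add_zero]
    congr 1
    have : (M t).updateCol l (ξc t) = M t := by
      rw [← hMl t]
      exact Matrix.updateCol_eq_self (M t) l
    rw [this]
  -- derivative of D simplified
  have hDder' : ∀ t, HasDerivAt D (-(s t * (r t)⁻¹) * D t) t := by
    intro t
    have h1 := hDder t
    have h2 : (∑ j, ((M t).updateCol j (g' t j)).det)
        = -(s t * (r t)⁻¹) * D t := by
      have e1 : ∀ j, ((M t).updateCol j (g' t j)).det
          = ((M t).updateCol j ((A t).mulVec (fun i => M t i j))).det
            + (if j = l then -(((M t).updateCol l ((S t).mulVec (ξc t))).det) else 0) := by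
        intro j
        rw [hg'split t j, hMcol]
        by_cases hjl : j = l
        · subst hjl
          simp only [eq_self_iff_true, if_true]
          rw [Matrix.det_updateCol_add]
          congr 1
          rw [show -((S t).mulVec (ξc t)) = (-1 : ℂ) • ((S t).mulVec (ξc t)) from
              (neg_one_smul ℂ _).symm,
            Matrix.det_updateCol_smul]
          ring
        · simp only [if_neg hjl, add_zero]
      rw [Finset.sum_congr rfl fun j _ => e1 j, Finset.sum_add_distrib, liouville,
        Finset.sum_ite_eq' Finset.univ l
          (fun _ => -(((M t).updateCol l ((S t).mulVec (ξc t))).det))]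
      rw [if_pos (Finset.mem_univ l), htrA t, hdetS t]
      have hDM : (M t).det = D t := by
        rw [hMdef, Matrix.det_transpose]; rfl
      rw [hDM]
      ring
    rwa [h2] at h1
  -- derivative of r
  have hrder : ∀ t, HasDerivAt r (-(s t)) t := by
    intro t
    have h1 : HasDerivAt (fun t => (∑ i, ξ t i ^ 2 : ℝ))
        (∑ i, 2 * ξ t i * ((-((jacobian u (x t)).transpose.mulVec (ξ t))) i)) t := by
      refine HasDerivAt.fun_sum fun i _ => ?_
      have h := ((hasDerivAt_pi.1 (hξ t)) i).fun_pow 2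
      exact h.congr_deriv (by ring)
    have h2 := h1.ofReal_comp
    have h3 : ((∑ i, 2 * ξ t i * ((-((jacobian u (x t)).transpose.mulVec (ξ t))) i) : ℝ) : ℂ)
        = -(s t) := by
      have e1 : ((∑ i, 2 * ξ t i * ((-((jacobian u (x t)).transpose.mulVec (ξ t))) i) : ℝ) : ℂ)
          = ∑ i, 2 * ξc t i * ((-((A t).transpose.mulVec (ξc t))) i) := by
        push_cast
        refine Finset.sum_congr rfl fun i _ => ?_
        rw [congrFun (hcast t) i]
      rw [e1]
      have e2 : ∑ i, 2 * ξc t i * ((-((A t).transpose.mulVec (ξc t))) i)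
          = -(2 * dotProduct (ξc t) ((A t).transpose.mulVec (ξc t))) := by
        simp only [Pi.neg_apply, dotProduct, Finset.mul_sum, ← Finset.sum_neg_distrib]
        exact Finset.sum_congr rfl fun i _ => by ring
      rw [e2]
      have e3 : s t = 2 * dotProduct (ξc t) ((A t).transpose.mulVec (ξc t)) := by
        simp only [hsdef, hSdef, Matrix.add_mulVec, dotProduct_add]
        have : dotProduct (ξc t) ((A t).mulVec (ξc t))
            = dotProduct (ξc t) ((A t).transpose.mulVec (ξc t)) := by
          rw [Matrix.dotProduct_mulVec, ← Matrix.mulVec_transpose, dotProduct_comm]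
        rw [this]; ring
      rw [e3]
    rw [← h3]
    exact h2
  -- conserved quantity
  have hfconst : ∀ a c : ℝ, D a * (r a)⁻¹ = D c * (r c)⁻¹ := by
    have hF : ∀ t : ℝ, HasDerivAt (fun t => D t / r t) 0 t := by
      intro t
      have h1 := (hDder' t).div (hrder t) (hr0 t)
      refine h1.congr_deriv ?_
      rw [show -(s t * (r t)⁻¹) * D t * r t - D t * -s t = 0 from by
        calc -(s t * (r t)⁻¹) * D t * r t - D t * -s t
            = -(s t * D t) * ((r t)⁻¹ * r t) + D t * s t := by ring
          _ = 0 := by rw [inv_mul_cancel₀ (hr0 t)]; ring, zero_div]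
    intro a c
    have := const_of_hasDerivAt_zero hF a c
    simpa [div_eq_mul_inv] using this
  -- conclusion
  have key : ∀ t, (Matrix.of fun i (j : Fin n) =>
      if h : (j : ℕ) < n - 1 then b ⟨j, h⟩ t i else ((ξ t i : ℝ) : ℂ)) = M t := by
    intro t
    ext i j
    show _ = (N t).transpose i j
    rw [Matrix.transpose_apply]
    show _ = g t j i
    simp only [hgdef, Matrix.of_apply]
    split_ifs <;> rfl
  have hDM : ∀ t, (Matrix.det (Matrix.of fun i (j : Fin n) =>
      if h : (j : ℕ) < n - 1 then b ⟨j, h⟩ t i else ((ξ t i : ℝ) : ℂ))) = D t := by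
    intro t
    rw [key t, hMdef, Matrix.det_transpose]
    rfl
  rw [hDM t₁, hDM t₂]
  exact hfconst t₁ t₂
end

section
/- Let n ≥ 2 and let u : ℝⁿ → ℝⁿ be a C¹ divergence-free vector field (tr Du ≡ 0). Let x, ξ be differentiable curves with x'(t) = u(x(t)), ξ'(t) = −(Du(x(t)))ᵀ ξ(t), ξ(t) ≠ 0 for all t, and suppose ξ decays exponentially: limsup_{t→∞} (1/t) log ‖ξ(t)‖ ≤ −λ for some λ > 0. Let b₀¹, …, b₀^{n−1} ∈ ℂⁿ satisfy b₀ⁱ·ξ(0) = 0 and det[b₀¹, …, b₀^{n−1}, ξ(0)] ≠ 0, and let b₁, …, b_{n−1} be the solutions of the Euler amplitude equation bᵢ'(t) = (2ξ(t)ξ(t)ᵀ/‖ξ(t)‖² − I) Du(x(t)) bᵢ(t) with bᵢ(0) = b₀ⁱ. Then limsup_{t→∞} (1/t) log (max_{1≤i≤n−1} ‖bᵢ(t)‖) ≥ λ/(n−1) > 0; in particular, at least one solution of the amplitude equation grows exponentially. -/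
open Matrix Finset

/-- trace identity: sum over columns of det with column k replaced by `M` applied to it. -/
lemma sum_det_updateColumn_mulVec {n : Type*} [DecidableEq n] [Fintype n]
    {R : Type*} [CommRing R] (A M : Matrix n n R) :
    ∑ k, (A.updateCol k (M.mulVec (fun i => A i k))).det = M.trace * A.det := by
  have h : ∀ k, (A.updateCol k (M.mulVec (fun i => A i k))).det
      = (A.adjugate * M * A) k k := by
    intro k
    rw [← Matrix.cramer_apply, Matrix.cramer_eq_adjugate_mulVec]
    simp [Matrix.mul_apply, Matrix.mulVec, dotProduct, Finset.mul_sum, Finset.sum_mul]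
    rw [Finset.sum_comm]
    congr 1; ext i; congr 1; ext j; ring
  simp_rw [h]
  have : ∑ k, (A.adjugate * M * A) k k = Matrix.trace (A.adjugate * M * A) := rfl
  rw [this, Matrix.trace_mul_cycle, Matrix.mul_adjugate, Matrix.smul_mul, Matrix.one_mul,
    Matrix.trace_smul]
  simp [smul_eq_mul, mul_comm]

/-- derivative of a determinant whose columns are differentiable curves. -/
lemma hasDerivAt_det_cols {n : ℕ} (c : Fin n → ℝ → Fin n → ℂ) (d : Fin n → Fin n → ℂ) (t : ℝ)
    (hc : ∀ j i, HasDerivAt (fun s => c j s i) (d j i) t) :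
    HasDerivAt (fun s => (Matrix.of fun i j => c j s i).det)
      (∑ k, (Matrix.of fun i j => if j = k then d k i else c j t i).det) t := by
  have key : HasDerivAt (fun s => ∑ σ : Equiv.Perm (Fin n),
        (Equiv.Perm.sign σ : ℂ) * ∏ i, c i s (σ i))
      (∑ σ : Equiv.Perm (Fin n), (Equiv.Perm.sign σ : ℂ) *
        ∑ k, (∏ j ∈ Finset.univ.erase k, c j t (σ j)) • d k (σ k)) t := by
    refine HasDerivAt.fun_sum fun σ _ => ?_
    exact (HasDerivAt.fun_finsetProd (fun i _ => hc i (σ i))).const_mul _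
  have e1 : (fun s => (Matrix.of fun i j => c j s i).det)
      = fun s => ∑ σ : Equiv.Perm (Fin n), (Equiv.Perm.sign σ : ℂ) * ∏ i, c i s (σ i) := by
    funext s
    rw [Matrix.det_apply']
    rfl
  rw [e1]
  convert key using 1
  simp_rw [Matrix.det_apply']
  rw [Finset.sum_comm]
  refine Finset.sum_congr rfl fun σ _ => ?_
  rw [Finset.mul_sum]
  refine Finset.sum_congr rfl fun k _ => ?_
  congr 1
  rw [← Finset.mul_prod_erase Finset.univ _ (Finset.mem_univ k)]
  rw [smul_eq_mul, mul_comm]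
  congr 1
  · refine Finset.prod_congr rfl fun i hi => ?_
    simp [Finset.ne_of_mem_erase hi]
  · simp

/-- crude Hadamard-type bound with column-wise entry bounds. -/
lemma abs_det_le_prod {n : ℕ} (B : Matrix (Fin n) (Fin n) ℂ) (cb : Fin n → ℝ)
    (h : ∀ i j, ‖B i j‖ ≤ cb j) :
    ‖B.det‖ ≤ (n.factorial : ℝ) * ∏ j, cb j := by
  have hcb : ∀ j, 0 ≤ cb j := fun j => le_trans (norm_nonneg _) (h j j)
  rw [Matrix.det_apply']
  calc ‖∑ σ : Equiv.Perm (Fin n), (Equiv.Perm.sign σ : ℂ) * ∏ i, B (σ i) i‖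
      ≤ ∑ σ : Equiv.Perm (Fin n), ‖(Equiv.Perm.sign σ : ℂ) * ∏ i, B (σ i) i‖ :=
        norm_sum_le _ _
    _ ≤ ∑ σ : Equiv.Perm (Fin n), ∏ j, cb j := by
        refine Finset.sum_le_sum fun σ _ => ?_
        rw [norm_mul, norm_prod]
        have hsign : ‖((Equiv.Perm.sign σ : ℤ) : ℂ)‖ = 1 := by
          rcases Int.units_eq_one_or (Equiv.Perm.sign σ) with h1 | h1 <;> simp [h1]
        rw [hsign, one_mul]
        exact Finset.prod_le_prod (fun i _ => norm_nonneg _) fun i _ => h (σ i) i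
    _ = (n.factorial : ℝ) * ∏ j, cb j := by
        rw [Finset.sum_const, Finset.card_univ, nsmul_eq_mul]
        congr 1
        simp [Fintype.card_perm]

/-- a matrix whose columns all pair to zero with a nonzero vector has zero determinant. -/
lemma det_eq_zero_of_pairing {n : ℕ} (B : Matrix (Fin n) (Fin n) ℂ) (v : Fin n → ℂ)
    (hv : v ≠ 0) (h : ∀ j, ∑ i, v i * B i j = 0) : B.det = 0 := by
  by_contra hdet
  exact hv (Matrix.eq_zero_of_vecMul_eq_zero hdet (funext fun j => h j))

lemma vecMulVec_mulVec' {n : ℕ} (w v x : Fin n → ℝ) :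
    (Matrix.vecMulVec w v).mulVec x = (v ⬝ᵥ x) • w := by
  funext i
  simp [Matrix.mulVec, Matrix.vecMulVec_apply, dotProduct, Finset.mul_sum, Finset.sum_mul]
  exact Finset.sum_congr rfl fun j _ => by ring

lemma map_mulVec_ofReal {n : ℕ} (P : Matrix (Fin n) (Fin n) ℝ) (v : Fin n → ℝ) :
    (P.map Complex.ofReal).mulVec (fun i => (v i : ℂ)) = fun i => ((P.mulVec v i : ℝ) : ℂ) := by
  funext i
  simp [Matrix.mulVec, dotProduct, Matrix.map_apply]

lemma pairing_sum {n : ℕ} (P : Matrix (Fin n) (Fin n) ℝ) (B : Fin n → ℂ) (v : Fin n → ℝ) :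
    ∑ j, ((P.map Complex.ofReal).mulVec B) j * (v j : ℂ)
      = ∑ k, B k * ((Pᵀ.mulVec v) k : ℂ) := by
  simp only [Matrix.mulVec, dotProduct, Matrix.map_apply, Matrix.transpose_apply,
    Finset.sum_mul, Finset.mul_sum]
  rw [Finset.sum_comm]
  refine Finset.sum_congr rfl fun j _ => ?_
  push_cast
  rw [Finset.mul_sum]
  refine Finset.sum_congr rfl fun k _ => by ring

lemma trace_vecMulVec_mul {n : ℕ} (w v : Fin n → ℝ) (J : Matrix (Fin n) (Fin n) ℝ) :
    (Matrix.vecMulVec w v * J).trace = v ⬝ᵥ (J.mulVec w) := by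
  simp only [Matrix.trace, Matrix.diag, Matrix.mul_apply, Matrix.vecMulVec_apply,
    dotProduct, Matrix.mulVec, Finset.mul_sum]
  rw [Finset.sum_comm]
  refine Finset.sum_congr rfl fun j _ => Finset.sum_congr rfl fun k _ => by ring

/-- If the frequency `ξ(t)` decays exponentially
(`limsup (1/t) log ‖ξ(t)‖ ≤ -λ`, `λ > 0`) along a bicharacteristic of a divergence-free
field `u`, and `b₁,…,b_{n−1}` solve the Euler amplitude equation with initial data
orthogonal to `ξ(0)` and with `det[b₁(0),…,b_{n−1}(0),ξ(0)] ≠ 0`, then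
`limsup (1/t) log max_i ‖bᵢ(t)‖ ≥ λ/(n−1) > 0`: some amplitude grows exponentially. -/
theorem stmt_6 {n : ℕ} (hn : 2 ≤ n)
    (u : (Fin n → ℝ) → (Fin n → ℝ)) (hu : ContDiff ℝ 1 u)
    (hdiv : ∀ y, Matrix.trace (jacobian u y) = 0)
    (x : ℝ → Fin n → ℝ) (ξ : ℝ → Fin n → ℝ)
    (hξne : ∀ t, ξ t ≠ 0)
    (hx : ∀ t, HasDerivAt x (u (x t)) t)
    (hξ : ∀ t, HasDerivAt ξ (-((jacobian u (x t)).transpose.mulVec (ξ t))) t)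
    (lam : ℝ) (hlam : 0 < lam)
    (hdecay : ∀ ε > (0:ℝ), ∀ᶠ t in Filter.atTop,
      Real.log (Real.sqrt (∑ i, ξ t i ^ 2)) / t ≤ -lam + ε)
    (b : Fin (n - 1) → ℝ → Fin n → ℂ)
    (hb : ∀ i t, HasDerivAt (b i)
      (((((2 / (∑ j, ξ t j ^ 2)) • Matrix.vecMulVec (ξ t) (ξ t) - 1)
          * jacobian u (x t)).map Complex.ofReal).mulVec (b i t)) t)
    (hb0 : ∀ i, (∑ j, b i 0 j * (ξ 0 j : ℂ)) = 0)
    (hdet0 : Matrix.det (Matrix.of fun i (j : Fin n) =>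
        if h : (j : ℕ) < n - 1 then b ⟨j, h⟩ 0 i else (ξ 0 i : ℂ)) ≠ 0) :
    0 < lam / ((n : ℝ) - 1) ∧
    ∀ ε > (0:ℝ), ∃ᶠ t in Filter.atTop,
      lam / ((n : ℝ) - 1) - ε ≤
        Real.log (⨆ i : Fin (n - 1),
          Real.sqrt (∑ j, ‖b i t j‖ ^ 2)) / t := by
  -- basic numerology
  have hn1 : (1:ℕ) ≤ n - 1 := by omega
  have hnlt : n - 1 < n := by omega
  have hm0 : (0:ℝ) < (n:ℝ) - 1 := by
    have : (2:ℝ) ≤ (n:ℝ) := by exact_mod_cast hn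
    linarith
  have hS : ∀ t, 0 < ∑ j, ξ t j ^ 2 := by
    intro t
    have := hξne t
    rw [Function.ne_iff] at this
    obtain ⟨j, hj⟩ := this
    refine Finset.sum_pos' (fun i _ => sq_nonneg _) ⟨j, Finset.mem_univ j, ?_⟩
    exact pow_pos (abs_pos.mpr hj) 2 |>.trans_le (le_of_eq (sq_abs _))
  -- abbreviations
  set J : ℝ → Matrix (Fin n) (Fin n) ℝ := fun t => jacobian u (x t) with hJ
  set S : ℝ → ℝ := fun t => ∑ j, ξ t j ^ 2 with hSdef
  set P : ℝ → Matrix (Fin n) (Fin n) ℝ :=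
    fun t => ((2 / S t) • Matrix.vecMulVec (ξ t) (ξ t) - 1) * J t with hPdef
  -- columns and their derivatives
  set col : Fin n → ℝ → Fin n → ℂ :=
    fun j t => if h : (j : ℕ) < n - 1 then b ⟨j, h⟩ t else fun i => (ξ t i : ℂ) with hcoldef
  set dcol : Fin n → ℝ → Fin n → ℂ :=
    fun j t => if h : (j : ℕ) < n - 1 then ((P t).map Complex.ofReal).mulVec (b ⟨j, h⟩ t)
      else fun i => ((-(((J t)ᵀ).mulVec (ξ t)) i : ℝ) : ℂ) with hdcoldef
  have hcol : ∀ j t i, HasDerivAt (fun s => col j s i) (dcol j t i) t := by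
    intro j t i
    by_cases h : (j : ℕ) < n - 1
    · simp only [hcoldef, hdcoldef, dif_pos h]
      exact hasDerivAt_pi.1 (hb ⟨j, h⟩ t) i
    · simp only [hcoldef, hdcoldef, dif_neg h]
      exact ((hasDerivAt_pi.1 (hξ t) i)).ofReal_comp
  -- basic vector identities
  have hww : ∀ t, ξ t ⬝ᵥ ξ t = S t := by
    intro t
    simp [hSdef, dotProduct, sq]
  have hXsymm : ∀ t, ((2 / S t) • Matrix.vecMulVec (ξ t) (ξ t) - 1)ᵀ
      = (2 / S t) • Matrix.vecMulVec (ξ t) (ξ t) - 1 := by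
    intro t
    rw [Matrix.transpose_sub, Matrix.transpose_smul, Matrix.transpose_one]
    congr 1
    ext i j
    simp [Matrix.transpose_apply, Matrix.vecMulVec_apply, mul_comm]
  have hXξ : ∀ t, ((2 / S t) • Matrix.vecMulVec (ξ t) (ξ t) - 1).mulVec (ξ t) = ξ t := by
    intro t
    rw [Matrix.sub_mulVec, Matrix.smul_mulVec, vecMulVec_mulVec', hww, Matrix.one_mulVec,
      smul_smul, div_mul_cancel₀ _ (hS t).ne']
    funext i
    simp
    ring
  have hPtξ : ∀ t, ((P t)ᵀ).mulVec (ξ t) = ((J t)ᵀ).mulVec (ξ t) := by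
    intro t
    simp only [hPdef]
    rw [Matrix.transpose_mul, ← Matrix.mulVec_mulVec, hXsymm t, hXξ t]
  have hPξ : ∀ t, (P t).mulVec (ξ t)
      = ((2 / S t) * (ξ t ⬝ᵥ (J t).mulVec (ξ t))) • ξ t - (J t).mulVec (ξ t) := by
    intro t
    simp only [hPdef]
    rw [← Matrix.mulVec_mulVec, Matrix.sub_mulVec, Matrix.smul_mulVec,
      vecMulVec_mulVec', Matrix.one_mulVec, smul_smul]
  have htrP : ∀ t, (P t).trace = (2 / S t) * (ξ t ⬝ᵥ (J t).mulVec (ξ t)) := by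
    intro t
    simp only [hPdef, hJ]
    rw [Matrix.sub_mul, Matrix.trace_sub, Matrix.one_mul, hdiv (x t), sub_zero,
      Matrix.smul_mul, Matrix.trace_smul, trace_vecMulVec_mul, smul_eq_mul]
  -- orthogonality of b i and ξ is preserved
  have horth : ∀ i t, ∑ j, b i t j * (ξ t j : ℂ) = 0 := by
    intro i t
    have hgd : ∀ s, HasDerivAt (fun r => ∑ j, b i r j * (ξ r j : ℂ)) 0 s := by
      intro s
      have hderiv : HasDerivAt (fun r => ∑ j, b i r j * (ξ r j : ℂ))
          (∑ j, ((((P s).map Complex.ofReal).mulVec (b i s)) j * (ξ s j : ℂ)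
            + b i s j * (((-(((J s)ᵀ).mulVec (ξ s))) j : ℝ) : ℂ))) s := by
        refine HasDerivAt.fun_sum fun j _ => ?_
        exact (hasDerivAt_pi.1 (hb i s) j).mul ((hasDerivAt_pi.1 (hξ s) j).ofReal_comp)
      have hzero : (∑ j, ((((P s).map Complex.ofReal).mulVec (b i s)) j * (ξ s j : ℂ)
            + b i s j * (((-(((J s)ᵀ).mulVec (ξ s))) j : ℝ) : ℂ))) = 0 := by
        rw [Finset.sum_add_distrib, pairing_sum, hPtξ s]
        simp [mul_neg, Finset.sum_neg_distrib]
      rw [hzero] at hderiv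
      exact hderiv
    have hconst : (∑ j, b i t j * (ξ t j : ℂ)) = ∑ j, b i 0 j * (ξ 0 j : ℂ) :=
      is_const_of_deriv_eq_zero (fun s => (hgd s).differentiableAt)
        (fun s => (hgd s).deriv) t 0
    rw [hconst, hb0 i]
  -- the determinant is constant
  have hξcne : ∀ t, (fun i => ((ξ t i : ℝ) : ℂ)) ≠ 0 := by
    intro t h
    apply hξne t
    funext i
    exact Complex.ofReal_eq_zero.mp (by simpa using congrFun h i)
  have hlastlt : ¬((n - 1 : ℕ) < n - 1) := lt_irrefl _
  have hklt : ∀ k : Fin n, k ≠ (⟨n - 1, hnlt⟩ : Fin n) → (k : ℕ) < n - 1 := by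
    intro k hk
    have h1 := k.isLt
    by_contra h
    exact hk (Fin.ext (show (k : ℕ) = n - 1 by omega))
  have hW : ∀ t, HasDerivAt (fun s => (Matrix.of fun i j => col j s i).det) 0 t := by
    intro t
    have hd := hasDerivAt_det_cols col (fun k => dcol k t) t (fun j i => hcol j t i)
    set A : Matrix (Fin n) (Fin n) ℂ := Matrix.of fun i j => col j t i with hA
    set last : Fin n := ⟨n - 1, hnlt⟩ with hlastdef
    have hupd : ∀ k : Fin n, (Matrix.of fun i j => if j = k then dcol k t i else col j t i)
        = A.updateCol k (dcol k t) := by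
      intro k
      ext i j
      by_cases h : j = k <;> simp [Matrix.updateCol_apply, h, hA]
    have hAcol : ∀ (k : Fin n) (h : (k : ℕ) < n - 1), (fun i => A i k) = b ⟨k, h⟩ t := by
      intro k h
      funext i
      simp [hA, hcoldef, dif_pos h]
    have hAlast : (fun i => A i last) = fun i => ((ξ t i : ℝ) : ℂ) := by
      funext i
      simp [hA, hcoldef, hlastdef, dif_neg hlastlt]
    set Pc : Matrix (Fin n) (Fin n) ℂ := (P t).map Complex.ofReal with hPc
    set Dc : Fin n → ℂ :=
      fun i => (((-(((J t)ᵀ).mulVec (ξ t))) i : ℝ) : ℂ) - (Pc.mulVec (fun i' => A i' last)) i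
      with hDc
    have hsplit : ∀ k : Fin n, (A.updateCol k (dcol k t)).det
        = (A.updateCol k (Pc.mulVec (fun i => A i k))).det
          + (if k = last then (A.updateCol last Dc).det else 0) := by
      intro k
      by_cases hk : k = last
      · rw [if_pos hk, hk]
        have hdc : dcol last t = Pc.mulVec (fun i => A i last) + Dc := by
          funext i
          have h1 : dcol last t i = (((-(((J t)ᵀ).mulVec (ξ t))) i : ℝ) : ℂ) := by
            simp [hdcoldef, hlastdef, dif_neg hlastlt]
          rw [Pi.add_apply, h1]
          simp only [hDc]
          ring
        rw [hdc, Matrix.det_updateCol_add]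
      · rw [if_neg hk, add_zero]
        congr 1
        have h := hklt k hk
        have : dcol k t = Pc.mulVec (b ⟨k, h⟩ t) := by
          simp [hdcoldef, dif_pos h, hPc]
        rw [this, hAcol k h]
    have hsum1 : ∑ k, (A.updateCol k (Pc.mulVec (fun i => A i k))).det
        = Pc.trace * A.det := sum_det_updateColumn_mulVec A Pc
    -- the correction column
    set c : ℝ := (2 / S t) * (ξ t ⬝ᵥ (J t).mulVec (ξ t)) with hc
    have hDceq : Dc = ((-c : ℝ) : ℂ) • (fun i => ((ξ t i : ℝ) : ℂ))
        + fun i => ((((J t - (J t)ᵀ).mulVec (ξ t)) i : ℝ) : ℂ) := by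
      funext i
      rw [hDc, hAlast, map_mulVec_ofReal]
      have h1 : (P t).mulVec (ξ t) i = c * ξ t i - (J t).mulVec (ξ t) i := by
        rw [hPξ t]
        simp [hc]
      simp only [h1, Matrix.sub_mulVec, Pi.add_apply, Pi.smul_apply, Pi.sub_apply,
        Pi.neg_apply, smul_eq_mul]
      push_cast
      ring
    have hdetDc : (A.updateCol last Dc).det = ((-c : ℝ) : ℂ) * A.det := by
      rw [hDceq, Matrix.det_updateCol_add, Matrix.det_updateCol_smul]
      have e1 : A.updateCol last (fun i => ((ξ t i : ℝ) : ℂ)) = A := by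
        rw [← hAlast, Matrix.updateCol_eq_self]
      have e2 : (A.updateCol last
          (fun i => ((((J t - (J t)ᵀ).mulVec (ξ t)) i : ℝ) : ℂ))).det = 0 := by
        refine det_eq_zero_of_pairing _ (fun i => ((ξ t i : ℝ) : ℂ)) (hξcne t) fun j => ?_
        by_cases hj : j = last
        · have e4 : ∀ i, (A.updateCol last
              (fun i => ((((J t - (J t)ᵀ).mulVec (ξ t)) i : ℝ) : ℂ))) i j
              = ((((J t - (J t)ᵀ).mulVec (ξ t)) i : ℝ) : ℂ) := by
            intro i
            rw [Matrix.updateCol_apply, if_pos hj]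
          simp only [e4]
          have hreal : ∑ i, ξ t i * ((J t - (J t)ᵀ).mulVec (ξ t)) i = 0 := by
            have h2 : ξ t ⬝ᵥ ((J t)ᵀ.mulVec (ξ t)) = ξ t ⬝ᵥ ((J t).mulVec (ξ t)) := by
              rw [Matrix.dotProduct_mulVec, Matrix.vecMul_transpose, dotProduct_comm]
            have h3 : ∑ i, ξ t i * ((J t - (J t)ᵀ).mulVec (ξ t)) i
                = ξ t ⬝ᵥ ((J t - (J t)ᵀ).mulVec (ξ t)) := rfl
            rw [h3, Matrix.sub_mulVec, dotProduct_sub, h2, sub_self]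
          rw [show (∑ i, ((ξ t i : ℝ) : ℂ) * ((((J t - (J t)ᵀ).mulVec (ξ t)) i : ℝ) : ℂ))
              = ((∑ i, ξ t i * ((J t - (J t)ᵀ).mulVec (ξ t)) i : ℝ) : ℂ) by push_cast; rfl,
            hreal]
          simp
        · have h := hklt j hj
          have e3 : ∀ i, (A.updateCol last
              (fun i => ((((J t - (J t)ᵀ).mulVec (ξ t)) i : ℝ) : ℂ))) i j = b ⟨j, h⟩ t i := by
            intro i
            rw [Matrix.updateCol_apply, if_neg hj]
            exact congrFun (hAcol j h) i
          simp only [e3]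
          rw [show ∑ i, ((ξ t i : ℝ) : ℂ) * b ⟨j, h⟩ t i
              = ∑ i, b ⟨j, h⟩ t i * ((ξ t i : ℝ) : ℂ) from
            Finset.sum_congr rfl fun i _ => mul_comm _ _]
          exact horth ⟨j, h⟩ t
      rw [e1, e2, add_zero]
    have htrPc : Pc.trace = ((c : ℝ) : ℂ) := by
      rw [hPc]
      have : ((P t).map Complex.ofReal).trace = (((P t).trace : ℝ) : ℂ) := by
        simp [Matrix.trace, Matrix.diag, Matrix.map_apply]
      rw [this, htrP t, hc]
    have hzero : (∑ k, (Matrix.of fun i j => if j = k then dcol k t i else col j t i).det)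
        = 0 := by
      calc (∑ k, (Matrix.of fun i j => if j = k then dcol k t i else col j t i).det)
          = ∑ k, (A.updateCol k (dcol k t)).det := by
            exact Finset.sum_congr rfl fun k _ => by rw [hupd k]
        _ = ∑ k, ((A.updateCol k (Pc.mulVec (fun i => A i k))).det
              + (if k = last then (A.updateCol last Dc).det else 0)) :=
            Finset.sum_congr rfl fun k _ => hsplit k
        _ = Pc.trace * A.det + (A.updateCol last Dc).det := by
            rw [Finset.sum_add_distrib, hsum1, Finset.sum_ite_eq' Finset.univ last]
            simp
        _ = 0 := by
            rw [hdetDc, htrPc]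
            push_cast
            ring
    rw [hzero] at hd
    exact hd
  -- the determinant is constant in time
  have hWc : ∀ t, (Matrix.of fun i j => col j t i).det = (Matrix.of fun i j => col j 0 i).det :=
    fun t => is_const_of_deriv_eq_zero (fun s => (hW s).differentiableAt)
      (fun s => (hW s).deriv) t 0
  have hcol0 : (Matrix.of fun i (j : Fin n) =>
      if h : (j : ℕ) < n - 1 then b ⟨j, h⟩ 0 i else ((ξ 0 i : ℝ) : ℂ))
      = Matrix.of fun i j => col j 0 i := by
    ext i j
    by_cases h : (j : ℕ) < n - 1 <;> simp [hcoldef, h]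
  set K : ℝ := ‖(Matrix.of fun i (j : Fin n) => col j 0 i).det‖ with hKdef
  have hK : 0 < K := by
    rw [hKdef]
    rw [hcol0] at hdet0
    exact norm_pos_iff.mpr hdet0
  -- Hadamard-type bound at each time
  have hnonempty : Nonempty (Fin (n - 1)) := ⟨⟨0, by omega⟩⟩
  set R : ℝ → ℝ := fun t => ⨆ i : Fin (n - 1), Real.sqrt (∑ j, ‖b i t j‖ ^ 2)
    with hRdef
  have hRb : ∀ t (i : Fin (n - 1)) (j : Fin n), ‖b i t j‖ ≤ R t := by
    intro t i j
    have h1 : ‖b i t j‖ ≤ Real.sqrt (∑ j', ‖b i t j'‖ ^ 2) := by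
      rw [show ‖b i t j‖ = Real.sqrt (‖b i t j‖ ^ 2) from
        (Real.sqrt_sq (norm_nonneg _)).symm]
      exact Real.sqrt_le_sqrt (Finset.single_le_sum
        (f := fun j' => ‖b i t j'‖ ^ 2) (fun _ _ => sq_nonneg _)
        (Finset.mem_univ j))
    refine h1.trans ?_
    show Real.sqrt (∑ j', ‖b i t j'‖ ^ 2)
      ≤ ⨆ i : Fin (n - 1), Real.sqrt (∑ j, ‖b i t j‖ ^ 2)
    exact le_ciSup (f := fun i : Fin (n - 1) => Real.sqrt (∑ j, ‖b i t j‖ ^ 2))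
      ((Set.finite_range _).bddAbove) i
  have hξb : ∀ t (i : Fin n), |ξ t i| ≤ Real.sqrt (S t) := by
    intro t i
    rw [← Real.sqrt_sq_eq_abs]
    exact Real.sqrt_le_sqrt (Finset.single_le_sum (f := fun j => ξ t j ^ 2)
      (fun _ _ => sq_nonneg _) (Finset.mem_univ i))
  have hRpos : ∀ t, 0 ≤ R t := by
    intro t
    show (0:ℝ) ≤ ⨆ i : Fin (n - 1), Real.sqrt (∑ j, ‖b i t j‖ ^ 2)
    exact le_ciSup_of_le
      (f := fun i : Fin (n - 1) => Real.sqrt (∑ j, ‖b i t j‖ ^ 2))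
      ((Set.finite_range _).bddAbove) (Classical.arbitrary _) (Real.sqrt_nonneg _)
  have hhad : ∀ t, K ≤ (n.factorial : ℝ) * (R t ^ (n - 1) * Real.sqrt (S t)) := by
    intro t
    have hb1 : ∀ i j : Fin n, ‖(Matrix.of fun i j => col j t i) i j‖
        ≤ (fun j : Fin n => if (j : ℕ) < n - 1 then R t else Real.sqrt (S t)) j := by
      intro i j
      by_cases h : (j : ℕ) < n - 1
      · simp only [Matrix.of_apply, hcoldef, dif_pos h, if_pos h]
        exact hRb t ⟨j, h⟩ i
      · simp only [Matrix.of_apply, hcoldef, dif_neg h, if_neg h]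
        rw [Complex.norm_real, Real.norm_eq_abs]
        exact hξb t i
    have h2 := abs_det_le_prod (Matrix.of fun i j => col j t i) _ hb1
    rw [← hWc t] at hKdef
    rw [hKdef]
    refine h2.trans (le_of_eq ?_)
    congr 1
    -- compute the product
    rw [← Finset.mul_prod_erase Finset.univ _ (Finset.mem_univ (⟨n - 1, hnlt⟩ : Fin n))]
    rw [if_neg hlastlt, mul_comm]
    congr 1
    rw [Finset.prod_congr rfl (fun j hj => if_pos (hklt j (Finset.ne_of_mem_erase hj))),
      Finset.prod_const, Finset.card_erase_of_mem (Finset.mem_univ _), Finset.card_univ,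
      Fintype.card_fin]
  -- conclusion
  constructor
  · exact div_pos hlam hm0
  · intro ε hε
    refine Filter.Eventually.frequently ?_
    have hε1 : 0 < ε * ((n : ℝ) - 1) / 2 := by positivity
    have hev1 := hdecay (ε * ((n : ℝ) - 1) / 2) hε1
    have hev2 : ∀ᶠ t in Filter.atTop,
        max 1 ((Real.log (n.factorial : ℝ) - Real.log K) / (ε / 2 * ((n : ℝ) - 1))) ≤ t :=
      Filter.eventually_ge_atTop _
    filter_upwards [hev1, hev2] with t h1 h2
    have ht1 : (1 : ℝ) ≤ t := le_trans (le_max_left _ _) h2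
    have ht0 : (0 : ℝ) < t := lt_of_lt_of_le one_pos ht1
    have hsq : 0 < Real.sqrt (S t) := Real.sqrt_pos.mpr (hS t)
    have hfact : (0 : ℝ) < (n.factorial : ℝ) := by exact_mod_cast n.factorial_pos
    have hRt : 0 < R t := by
      by_contra hcon
      push_neg at hcon
      have hR0 : R t = 0 := le_antisymm hcon (hRpos t)
      have h0 := hhad t
      rw [hR0, zero_pow (by omega : n - 1 ≠ 0), zero_mul, mul_zero] at h0
      linarith
    have hlog : Real.log K ≤ Real.log ((n.factorial : ℝ))
        + (((n - 1 : ℕ) : ℝ) * Real.log (R t) + Real.log (Real.sqrt (S t))) := by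
      have h3 := (Real.log_le_log_iff hK (by positivity)).mpr (hhad t)
      rwa [Real.log_mul hfact.ne' (mul_pos (pow_pos hRt (n - 1)) hsq).ne',
        Real.log_mul (pow_pos hRt (n - 1)).ne' hsq.ne', Real.log_pow] at h3
    have hmcast : ((n - 1 : ℕ) : ℝ) = (n : ℝ) - 1 := by
      have h4 : (1 : ℕ) ≤ n := by omega
      push_cast [Nat.cast_sub h4]
      ring
    rw [hmcast] at hlog
    have hlogS : Real.log (Real.sqrt (S t)) ≤ (-lam + ε * ((n : ℝ) - 1) / 2) * t := by
      rw [div_le_iff₀ ht0] at h1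
      exact h1
    have hKn : -(ε / 2 * ((n : ℝ) - 1)) * t ≤ Real.log K - Real.log (n.factorial : ℝ) := by
      have h2' : (Real.log (n.factorial : ℝ) - Real.log K) / (ε / 2 * ((n : ℝ) - 1)) ≤ t :=
        le_trans (le_max_right _ _) h2
      have hpos : 0 < ε / 2 * ((n : ℝ) - 1) := by positivity
      rw [div_le_iff₀ hpos] at h2'
      nlinarith
    have hkey : (lam - ε * ((n : ℝ) - 1)) * t ≤ ((n : ℝ) - 1) * Real.log (R t) := by
      nlinarith
    show lam / ((n : ℝ) - 1) - ε ≤ Real.log (R t) / t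
    rw [le_div_iff₀ ht0]
    calc (lam / ((n : ℝ) - 1) - ε) * t = ((lam - ε * ((n : ℝ) - 1)) * t) / ((n : ℝ) - 1) := by
          rw [eq_div_iff hm0.ne']
          have e5 : lam / ((n : ℝ) - 1) * ((n : ℝ) - 1) = lam := div_mul_cancel₀ _ hm0.ne'
          linear_combination t * e5
      _ ≤ (((n : ℝ) - 1) * Real.log (R t)) / ((n : ℝ) - 1) :=
          (div_le_div_iff_of_pos_right hm0).mpr hkey
      _ = Real.log (R t) := by
          rw [mul_comm, mul_div_assoc, div_self hm0.ne', mul_one]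
end
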